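/- Let A be a Hom-finite k-linear abelian category having Auslander-Reiten duality, and α : X → Y an epimorphism with kernel K. Then α is right τ⁻¹K-determined: for every morphism t : T → Y such that t ∘ φ factors through α for all φ : τ⁻¹K → T, the morphism t itself factors through α. -/

import Mathlib

set_option linter.unusedSectionVars false

open CategoryTheory Abelian Limits

universe w v u

attribute [local instance] CategoryTheory.Abelian.hasFiniteBiproducts

variable {A : Type u} [Category.{v} A] [Abelian A]

/-- `M` belongs to `add K`: it is a direct summand of a finite direct sum of copies of `K`. -/
def InAdd (K M : A) : Prop :=
  ∃ (n : ℕ) (s : M ⟶ ⨁ (fun _ : Fin n => K)) (r : (⨁ fun _ : Fin n => K) ⟶ M),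
    s ≫ r = 𝟙 M

/-- `α` factors through `α'`. -/
def Factors {X X' Y : A} (α : X ⟶ Y) (α' : X' ⟶ Y) : Prop :=
  ∃ v : X ⟶ X', v ≫ α' = α

/-- `α` and `α'` are right equivalent. -/
def RightEquiv {X X' Y : A} (α : X ⟶ Y) (α' : X' ⟶ Y) : Prop :=
  Factors α α' ∧ Factors α' α

/-- A morphism is right minimal. -/
def RightMinimal {X Y : A} (α : X ⟶ Y) : Prop :=
  ∀ v : X ⟶ X, v ≫ α = α → IsIso v

/-- A short exact sequence `0 → K → X → Y → 0`. -/
structure SES (K Y : A) where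
  X : A
  i : K ⟶ X
  p : X ⟶ Y
  zero : i ≫ p = 0
  shortExact : (ShortComplex.mk i p zero).ShortExact

variable [HasExt.{w} A]

lemma Ext.mk₀_add' {X Y : A} (f g : X ⟶ Y) :
    Ext.mk₀ (f + g) = Ext.mk₀ f + Ext.mk₀ g := by
  letI := HasDerivedCategory.standard A
  apply Ext.ext
  simp [Ext.add_hom, ShiftedHom.mk₀, Functor.map_add]

/-- The class `[ξ] ∈ Ext¹(Y, K)` of a short exact sequence `ξ`. -/
noncomputable def SES.cls {K Y : A} (E : SES K Y) : Ext Y K 1 :=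
  E.shortExact.extClass

/-- The class `[u.ξ]` of the pushout of `ξ` along `u`. -/
noncomputable def SES.push {K Y Z : A} (E : SES K Y) (u : K ⟶ Z) : Ext Y Z 1 :=
  E.cls.comp (Ext.mk₀ u) (add_zero 1)

noncomputable instance extSMulEnd (Y K : A) : SMul (End K) (Ext Y K 1) :=
  ⟨fun g e => e.comp (Ext.mk₀ g) (add_zero 1)⟩

lemma extSmul_def {Y K : A} (g : End K) (e : Ext Y K 1) :
    g • e = e.comp (Ext.mk₀ g) (add_zero 1) := rfl

/-- `Ext¹(Y, K)` as a left module over `Γ(K) = End K`, via pushout. -/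
noncomputable instance extModuleEnd (Y K : A) : Module (End K) (Ext Y K 1) where
  one_smul e := by rw [extSmul_def]; exact Ext.comp_mk₀_id e
  mul_smul g h e := by
    rw [extSmul_def, extSmul_def, extSmul_def,
      Ext.comp_assoc_of_third_deg_zero, Ext.mk₀_comp_mk₀]
    rfl
  smul_add g e f := by
    rw [extSmul_def, extSmul_def, extSmul_def]; exact Ext.add_comp e f _ _
  add_smul g h e := by
    rw [extSmul_def, extSmul_def, extSmul_def, Ext.mk₀_add', Ext.comp_add]
  zero_smul e := by rw [extSmul_def]; rw [Ext.mk₀_zero, Ext.comp_zero]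
  smul_zero g := by rw [extSmul_def]; exact Ext.zero_comp _ _ _ _ _

/-- The connecting map `c(ξ, K) : Hom(K₁, K) → Ext¹(Y, K)`, `u ↦ [u.ξ]`,
as a morphism of left `Γ(K) = End K`-modules. -/
noncomputable def SES.conn {K₁ Y : A} (E : SES K₁ Y) (K : A) :
    (K₁ ⟶ K) →ₗ[End K] Ext Y K 1 where
  toFun u := E.push u
  map_add' u v := by
    dsimp [SES.push]
    rw [Ext.mk₀_add', Ext.comp_add]
  map_smul' g u := by
    dsimp [SES.push]
    rw [End.smul_right, extSmul_def, Ext.comp_assoc_of_third_deg_zero,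
      Ext.mk₀_comp_mk₀]

/-- Right minimality for a morphism of modules. -/
def ModRightMinimal {R : Type*} [Ring R] {M N : Type*} [AddCommGroup M] [AddCommGroup N]
    [Module R M] [Module R N] (c : M →ₗ[R] N) : Prop :=
  ∀ g : M →ₗ[R] M, c.comp g = c → Function.Bijective g

universe w'

/-- The `R`-module `M` admits a projective cover. -/
def HasProjCover (R : Type*) [Ring R] (M : Type w') [AddCommGroup M] [Module R M] : Prop :=
  ∃ (P : Type w') (_ : AddCommGroup P) (_ : Module R P) (f : P →ₗ[R] M),
    Module.Projective R P ∧ Function.Surjective f ∧ ModRightMinimal f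

/-- `ξ` is a universal `L`-extension of `Y` by `K`. -/
def IsUniversalExt (K : A) {K₁ Y : A} (E : SES K₁ Y) (L : Submodule (End K) (Ext Y K 1)) :
    Prop :=
  InAdd K K₁ ∧ LinearMap.range (E.conn K) = L ∧ ModRightMinimal (E.conn K)

lemma InAdd.self (K : A) : InAdd K K := by
  refine ⟨1, biproduct.ι (fun _ : Fin 1 => K) (0 : Fin 1), biproduct.π (fun _ : Fin 1 => K) 0, ?_⟩
  simp

section AR

variable (k : Type u) [CommRing k] [IsArtinianRing k] [CategoryTheory.Linear k A]

/-- The `k`-submodule of `Hom(C, T)` of projectively trivial morphisms, i.e. those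
factoring through every epimorphism ending at `T`. -/
def PTriv (C T : A) : Submodule k (C ⟶ T) where
  carrier := {f | ∀ ⦃W : A⦄ (g : W ⟶ T), Epi g → ∃ h : C ⟶ W, h ≫ g = f}
  add_mem' := by
    intro f f' hf hf' W g hg
    obtain ⟨h, rfl⟩ := hf g hg
    obtain ⟨h', rfl⟩ := hf' g hg
    exact ⟨h + h', by simp⟩
  zero_mem' := by
    intro W g hg
    exact ⟨0, by simp⟩
  smul_mem' := by
    intro c f hf W g hg
    obtain ⟨h, rfl⟩ := hf g hg
    exact ⟨c • h, by simp⟩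

/-- The stable Hom space `Hom̲(C, T) = Hom(C, T)/𝒫(C, T)`. -/
abbrev StHom (C T : A) := (C ⟶ T) ⧸ (PTriv (A := A) k C T)

variable [HasExt.{w} A]

/-- The `k`-module structure on `Ext¹(T, X)` induced by the `k`-linear structure
of the category, via the algebra map `k → End X` and pushout. -/
noncomputable instance extkMod (T X : A) : Module k (Ext T X 1) :=
  Module.compHom _ (algebraMap k (End X))

lemma kSmul_def (T X : A) (c : k) (e : Ext T X 1) :
    c • e = e.comp (Ext.mk₀ (algebraMap k (End X) c)) (add_zero 1) := rfl

/-- Pullback (contravariant functoriality of `Ext¹(-, X)`) along `t : T ⟶ T'`,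
as a `k`-linear map. -/
noncomputable def pbMap (X : A) {T T' : A} (t : T ⟶ T') :
    Ext T' X 1 →ₗ[k] Ext T X 1 where
  toFun e := (Ext.mk₀ t).comp e (zero_add 1)
  map_add' e e' := by
    rw [Ext.comp_add]
  map_smul' c e := by
    rw [kSmul_def, kSmul_def]
    exact (Ext.comp_assoc _ _ _ (zero_add 1) (add_zero 1) (by omega)).symm

/-- Postcomposition with `t : T ⟶ T'` on stable Hom spaces, as a `k`-linear map. -/
noncomputable def stMap (C : A) {T T' : A} (t : T ⟶ T') :
    StHom (A := A) k C T →ₗ[k] StHom (A := A) k C T' :=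
  Submodule.mapQ _ _ (Linear.rightComp k C t)
    (by
      intro f hf
      intro W g hg
      obtain ⟨h, hh⟩ := hf (pullback.snd g t) inferInstance
      refine ⟨h ≫ pullback.fst g t, ?_⟩
      rw [Category.assoc, pullback.condition, ← Category.assoc, hh]
      rfl)


/-- `α` is right `C`-determined. -/
def RightDetermined (C : A) {X Y : A} (α : X ⟶ Y) : Prop :=
  ∀ ⦃T : A⦄ (t : T ⟶ Y), (∀ φ : C ⟶ T, Factors (φ ≫ t) α) → Factors t α

/-- in a Hom-finite `k`-linear abelian category with Auslander-Reiten
duality `D Ext¹(T, X) ≅ Hom̲(τ⁻¹X, T)` (a functorial `k`-linear isomorphism, where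
`D = Hom_k(-, Ed)` is the duality with respect to the minimal injective cogenerator
`Ed` of the commutative artinian ring `k`), every epimorphism `α : X ⟶ Y` with
kernel `K` is right `τ⁻¹K`-determined. -/
theorem stmt17
    (homfin : ∀ X Y : A, Module.Finite k (X ⟶ Y))
    (Ed : Type u) [AddCommGroup Ed] [Module k Ed]
    (hinj : Module.Injective k Ed)
    (hcog : ∀ (N : Type u) [AddCommGroup N] [Module k N] (x : N), x ≠ 0 →
      ∃ φ : N →ₗ[k] Ed, φ x ≠ 0)
    (hminimal : ∀ (E' : Type u) [AddCommGroup E'] [Module k E'], Module.Injective k E' →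
      (∀ (N : Type u) [AddCommGroup N] [Module k N] (x : N), x ≠ 0 →
        ∃ φ : N →ₗ[k] E', φ x ≠ 0) →
      ∃ ι : Ed →ₗ[k] E', Function.Injective ι)
    (tinv : A → A)
    (Ψ : ∀ (T X : A), ((Ext T X 1) →ₗ[k] Ed) ≃ₗ[k] StHom (A := A) k (tinv X) T)
    (nat : ∀ (X : A) {T T' : A} (t : T ⟶ T') (θ : Ext T X 1 →ₗ[k] Ed),
      Ψ T' X (θ ∘ₗ pbMap k X t) = stMap k (tinv X) t (Ψ T X θ))
    {K Y : A} (E : SES K Y) :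
    RightDetermined (tinv K) E.p := by
  intro T t ht
  -- Step 1: every functional on `Ext T K 1` kills the pullback class `t.[ξ]`.
  have key : ∀ θ : Ext T K 1 →ₗ[k] Ed, θ ((Ext.mk₀ t).comp E.cls (zero_add 1)) = 0 := by
    intro θ
    obtain ⟨φ, hφ⟩ := Submodule.Quotient.mk_surjective _ (Ψ T K θ)
    obtain ⟨v, hv⟩ := ht φ
    set θ' : Ext E.X K 1 →ₗ[k] Ed := (Ψ E.X K).symm (Submodule.Quotient.mk v) with hθ'
    have h1 : Ψ Y K (θ ∘ₗ pbMap k K t) = stMap k (tinv K) t (Ψ T K θ) := nat K t θ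
    have h2 : Ψ Y K (θ' ∘ₗ pbMap k K E.p) = stMap k (tinv K) E.p (Ψ E.X K θ') := nat K E.p θ'
    rw [hθ', LinearEquiv.apply_symm_apply] at h2
    rw [← hφ] at h1
    have e1 : stMap k (tinv K) t (Submodule.Quotient.mk φ)
        = (Submodule.Quotient.mk (φ ≫ t) : StHom (A := A) k (tinv K) Y) := by
      rfl
    have e2 : stMap k (tinv K) E.p (Submodule.Quotient.mk v)
        = (Submodule.Quotient.mk (v ≫ E.p) : StHom (A := A) k (tinv K) Y) := by
      rfl
    have h3 : θ ∘ₗ pbMap k K t = θ' ∘ₗ pbMap k K E.p := by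
      apply (Ψ Y K).injective
      rw [h1, h2, e1, e2, hv]
    have h4 := LinearMap.congr_fun h3 E.cls
    simp only [LinearMap.comp_apply] at h4
    have h5 : pbMap k K E.p E.cls = 0 := by
      have : pbMap k K E.p E.cls = (Ext.mk₀ E.p).comp E.cls (zero_add 1) := rfl
      rw [this]
      exact E.shortExact.comp_extClass
    have h6 : pbMap k K t E.cls = (Ext.mk₀ t).comp E.cls (zero_add 1) := rfl
    rw [h6] at h4
    rw [h4, h5, map_zero]
  -- Step 2: hence the pullback class vanishes, using that `Ed` is an injective cogenerator.
  have he : (Ext.mk₀ t).comp E.cls (zero_add 1) = 0 := by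
    by_contra hne
    set e : Ext T K 1 := (Ext.mk₀ t).comp E.cls (zero_add 1) with hedef
    set L : k →ₗ[k] Ext T K 1 := LinearMap.toSpanSingleton k (Ext T K 1) e with hL
    have h1 : (Submodule.Quotient.mk (1 : k) : k ⧸ LinearMap.ker L) ≠ 0 := by
      intro h
      rw [Submodule.Quotient.mk_eq_zero] at h
      apply hne
      have := LinearMap.mem_ker.1 h
      rwa [hL, LinearMap.toSpanSingleton_apply_one] at this
    obtain ⟨φN, hφN⟩ := hcog (k ⧸ LinearMap.ker L) (Submodule.Quotient.mk 1) h1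
    obtain ⟨θ, hθ⟩ := (Module.Baer.of_injective hinj).extension_property
      (LinearMap.range L).subtype (Submodule.injective_subtype _)
      (φN ∘ₗ (L.quotKerEquivRange.symm : _ →ₗ[k] _))
    have hq : ((L.quotKerEquivRange (Submodule.Quotient.mk 1)) : Ext T K 1) = e := by
      rw [LinearMap.quotKerEquivRange_apply_mk, hL, LinearMap.toSpanSingleton_apply_one]
    have h7 := LinearMap.congr_fun hθ (L.quotKerEquivRange (Submodule.Quotient.mk 1))
    simp only [LinearMap.comp_apply, Submodule.subtype_apply, LinearEquiv.coe_coe,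
      LinearEquiv.symm_apply_apply] at h7
    rw [hq] at h7
    exact hφN (h7 ▸ key θ)
  -- Step 3: now deduce the factorization from the long exact sequence.
  obtain ⟨x₂, hx₂⟩ := Abelian.Ext.covariant_sequence_exact₃ T E.shortExact (Ext.mk₀ t) rfl he
  letI := HasDerivedCategory.standard A
  set F := DerivedCategory.singleFunctor A 0 with hFdef
  set H := DerivedCategory.homologyFunctor A 0 with hHdef
  let n : F ⋙ H ≅ 𝟭 A :=
    Functor.isoWhiskerRight ((SingleFunctors.evaluation _ _ 0).mapIso
      (DerivedCategory.singleFunctorsPostcompQIso A)) H ≪≫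
    Functor.associator _ _ _ ≪≫
    Functor.isoWhiskerLeft (CochainComplex.singleFunctor A 0)
      (DerivedCategory.homologyFunctorFactors A 0) ≪≫
    HomologicalComplex.homologyFunctorSingleIso A (ComplexShape.up ℤ) 0
  let ν := (shiftFunctorZero' (DerivedCategory A) ((0 : ℕ) : ℤ) (by simp)).hom
  let w : F.obj T ⟶ F.obj E.X := x₂.hom ≫ ν.app (F.obj E.X)
  have hw : w ≫ F.map E.p = F.map t := by
    have h1 := Abelian.Ext.hom_comp_singleFunctor_map_shift (C := A) x₂ E.p
    rw [hx₂, Ext.mk₀_hom] at h1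
    have h2 : ν.app (F.obj E.X) ≫ F.map E.p
        = (F.map E.p)⟦((0 : ℕ) : ℤ)⟧' ≫ ν.app (F.obj Y) := by
      simpa using (ν.naturality (F.map E.p)).symm
    show (x₂.hom ≫ ν.app (F.obj E.X)) ≫ F.map E.p = F.map t
    rw [Category.assoc, h2, ← Category.assoc, h1]
    simp [ShiftedHom.mk₀, ν]
    erw [Iso.inv_hom_id_app, Category.comp_id]
  refine ⟨n.inv.app T ≫ H.map w ≫ n.hom.app E.X, ?_⟩
  have hnat : ∀ {P Q : A} (f : P ⟶ Q),
      H.map (F.map f) ≫ n.hom.app Q = n.hom.app P ≫ f := by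
    intro P Q f
    simpa using n.hom.naturality f
  rw [Category.assoc, Category.assoc, ← hnat E.p, ← Functor.map_comp_assoc, hw, hnat t]
  simp

end AR
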